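/- Let $\Lambda \in \mathbb{R}$ and $e \neq 0$ with $1 + 4 e^2 \Lambda > 0$. Define $T = \Lambda + \frac{1 + \sqrt{1 + 4 e^2 \Lambda}}{2 e^2}$ and $Q_e = \frac{T - \Lambda}{T + \Lambda}\, e$. Then: (i) $T + \Lambda > 0$ and $Q_e = \frac{e}{\sqrt{1 + 4 \Lambda e^2}}$, so $1 - 4 \Lambda Q_e^2 = \frac{1}{1 + 4 \Lambda e^2} > 0$; (ii) $T + \Lambda = \frac{1 + \sqrt{1 - 4 \Lambda Q_e^2}}{2 Q_e^2}$ and $T - \Lambda = \frac{\sqrt{1 - 4 \Lambda Q_e^2} + 1 - 4 \Lambda Q_e^2}{2 Q_e^2}$; (iii) if $\Lambda > 0$, then $|Q_e| < \frac{1}{2 \sqrt{\Lambda}}$ (the Nariai bound). -/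

import Mathlib

/-- Maxwell--Λ Bertotti--Robinson solution (electric case `p = 0`):
the charge relation, the inverted radii formulas, and the Nariai bound. -/
theorem maxwell_lambda_bertotti_robinson
    (Λ e T Qe : ℝ) (he : e ≠ 0) (hpos : 1 + 4 * e ^ 2 * Λ > 0)
    (hT : T = Λ + (1 + Real.sqrt (1 + 4 * e ^ 2 * Λ)) / (2 * e ^ 2))
    (hQe : Qe = (T - Λ) / (T + Λ) * e) :
    (T + Λ > 0 ∧ Qe = e / Real.sqrt (1 + 4 * Λ * e ^ 2) ∧
      1 - 4 * Λ * Qe ^ 2 = 1 / (1 + 4 * Λ * e ^ 2)) ∧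
    (T + Λ = (1 + Real.sqrt (1 - 4 * Λ * Qe ^ 2)) / (2 * Qe ^ 2) ∧
      T - Λ = (Real.sqrt (1 - 4 * Λ * Qe ^ 2) + 1 - 4 * Λ * Qe ^ 2) / (2 * Qe ^ 2)) ∧
    (Λ > 0 → |Qe| < 1 / (2 * Real.sqrt Λ)) := by
  have he2 : (0:ℝ) < e ^ 2 := by positivity
  set s := Real.sqrt (1 + 4 * e ^ 2 * Λ) with hs
  have hspos : 0 < s := Real.sqrt_pos.mpr hpos
  have hs2 : s ^ 2 = 1 + 4 * e ^ 2 * Λ := Real.sq_sqrt hpos.le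
  have hs1 : 0 < 1 + s := by linarith
  -- T - Λ and T + Λ
  have hTm : T - Λ = (1 + s) / (2 * e ^ 2) := by rw [hT]; ring
  have hTp : T + Λ = s * (s + 1) / (2 * e ^ 2) := by
    rw [hT]
    field_simp
    nlinarith [hs2]
  have hTppos : 0 < T + Λ := by
    rw [hTp]; positivity
  -- Qe = e / s
  have hQ : Qe = e / s := by
    rw [hQe, hTm, hTp]
    field_simp
    ring
  have hseq : Real.sqrt (1 + 4 * Λ * e ^ 2) = s := by
    rw [hs]; ring_nf
  have hQ2 : Qe ^ 2 = e ^ 2 / s ^ 2 := by rw [hQ]; ring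
  have harg : 1 - 4 * Λ * Qe ^ 2 = 1 / (1 + 4 * e ^ 2 * Λ) := by
    rw [hQ2, hs2]
    have hne : 1 + 4 * e ^ 2 * Λ ≠ 0 := by linarith
    rw [eq_div_iff hne, sub_mul, mul_div_assoc', div_mul_cancel₀ _ hne]
    ring
  have hsq : Real.sqrt (1 - 4 * Λ * Qe ^ 2) = 1 / s := by
    rw [harg, ← hs2, one_div, Real.sqrt_inv, Real.sqrt_sq hspos.le, one_div]
  have h4 : 4 * Λ * Qe ^ 2 = 1 - 1 / s ^ 2 := by
    rw [← hs2] at harg; linarith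
  have hQ2pos : 0 < Qe ^ 2 := by
    rw [hQ2]; positivity
  refine ⟨⟨hTppos, by rw [hQ, hseq], by rw [harg]; ring_nf⟩, ⟨?_, ?_⟩, ?_⟩
  · rw [hsq, hTp, hQ2]
    field_simp
  · rw [hsq, h4, hQ2, hTm]
    field_simp
    ring
  · intro hΛ
    have hsΛ : 0 < Real.sqrt Λ := Real.sqrt_pos.mpr hΛ
    have hsΛ2 : Real.sqrt Λ ^ 2 = Λ := Real.sq_sqrt hΛ.le
    have h1 : Qe ^ 2 < 1 / (4 * Λ) := by
      rw [hQ2, hs2]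
      rw [div_lt_div_iff₀ (by nlinarith) (by linarith)]
      nlinarith
    have : |Qe| ^ 2 < (1 / (2 * Real.sqrt Λ)) ^ 2 := by
      rw [sq_abs]
      calc Qe ^ 2 < 1 / (4 * Λ) := h1
        _ = (1 / (2 * Real.sqrt Λ)) ^ 2 := by
            rw [div_pow, mul_pow, hsΛ2]; norm_num
    exact lt_of_pow_lt_pow_left₀ 2 (by positivity) this
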